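/- (ESO for independent per-node uniform sampling.) Let A_{iτ} ∈ ℝ^{d×t} for i ∈ [m], τ ∈ [n], N = mn, R_m = max_{i,τ}‖A_{iτ}‖, R̄² = max_τ (1/m)λ_max(∑_{i=1}^m A_{iτ}A_{iτ}ᵀ), R² = (1/N)λ_max(∑_{τ,i} A_{iτ}A_{iτ}ᵀ). Sample, for each node τ independently, an index i^τ uniform on [m], and let S = {(i^τ, τ) : τ ∈ [n]}. Then for every h = (h_{iτ})_{i∈[m],τ∈[n]} with h_{iτ} ∈ ℝ^t, E[‖∑_{(i,τ)∈S} A_{iτ} h_{iτ}‖²] ≤ (1/m)(R_m² + nR²) ∑_{τ=1}^n ∑_{i=1}^m ‖h_{iτ}‖². -/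

import Mathlib

open Finset

open RealInnerProductSpace in
lemma eso_expand_sq {d : ℕ} {n : ℕ} (w : Fin n → EuclideanSpace ℝ (Fin d)) :
    ‖∑ τ, w τ‖ ^ 2 = ∑ τ, ∑ τ', ⟪w τ, w τ'⟫ := by
  rw [← real_inner_self_eq_norm_sq, sum_inner]
  exact Finset.sum_congr rfl fun τ _ => inner_sum _ _ _

lemma sum_pi_eval' {ι : Type*} [Fintype ι] [DecidableEq ι] (m : ℕ) (τ : ι) (g : Fin m → ℝ) :
    ∑ σ : ι → Fin m, g (σ τ) = (m : ℝ) ^ (Fintype.card ι - 1) * ∑ i, g i := by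
  classical
  rw [← (Equiv.funSplitAt τ (Fin m)).symm.sum_comp (fun σ => g (σ τ))]
  simp [Fintype.sum_prod_type, Finset.sum_const, Fintype.card_fun, Finset.mul_sum]

lemma sum_pi_eval2 {ι : Type*} [Fintype ι] [DecidableEq ι] (m : ℕ) {τ τ' : ι} (hne : τ' ≠ τ)
    (f : Fin m → Fin m → ℝ) :
    ∑ σ : ι → Fin m, f (σ τ) (σ τ') = (m : ℝ) ^ (Fintype.card ι - 2) * ∑ i, ∑ j, f i j := by
  classical
  rw [← (Equiv.funSplitAt τ (Fin m)).symm.sum_comp (fun σ => f (σ τ) (σ τ'))]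
  simp only [Fintype.sum_prod_type, Equiv.funSplitAt_symm_apply, dif_pos rfl, dif_neg hne,
    dite_true]
  have h1 : ∀ i : Fin m, ∑ ρ : {j // j ≠ τ} → Fin m, f i (ρ ⟨τ', hne⟩)
      = (m : ℝ) ^ (Fintype.card {j : ι // j ≠ τ} - 1) * ∑ j, f i j := fun i =>
    sum_pi_eval' m (⟨τ', hne⟩ : {j : ι // j ≠ τ}) (fun j => f i j)
  simp only [h1]
  have hcard : Fintype.card {j : ι // j ≠ τ} = Fintype.card ι - 1 := by
    simp [Fintype.card_subtype_compl]
  rw [← Finset.mul_sum, hcard, show Fintype.card ι - 1 - 1 = Fintype.card ι - 2 from by omega]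

set_option maxHeartbeats 1000000 in
open RealInnerProductSpace in
/-- ESO for independent per-node uniform sampling:
`E‖∑_{(i,τ)∈S} A_{iτ} h_{iτ}‖² ≤ (1/m)(R_m² + nR²) ∑_{τ,i} ‖h_{iτ}‖²`,
where the expectation averages over all `σ : Fin n → Fin m` (independent uniform
indices per node). -/
theorem eso_independent_uniform_sampling {d t m n : ℕ} (hm : 0 < m)
    (A : Fin n → Fin m → (EuclideanSpace ℝ (Fin t) →L[ℝ] EuclideanSpace ℝ (Fin d)))
    (Rm R : ℝ)
    (hRm : ∀ τ i, ‖A τ i‖ ≤ Rm)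
    (hR : ∀ h : Fin n → Fin m → EuclideanSpace ℝ (Fin t),
      ‖∑ τ, ∑ i, A τ i (h τ i)‖ ^ 2 ≤ ((m : ℝ) * n) * R ^ 2 * ∑ τ, ∑ i, ‖h τ i‖ ^ 2)
    (h : Fin n → Fin m → EuclideanSpace ℝ (Fin t)) :
    (1 / (m : ℝ) ^ n) * ∑ σ : Fin n → Fin m, ‖∑ τ, A τ (σ τ) (h τ (σ τ))‖ ^ 2 ≤
      (1 / (m : ℝ)) * (Rm ^ 2 + n * R ^ 2) * ∑ τ, ∑ i, ‖h τ i‖ ^ 2 := by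
  classical
  rcases Nat.eq_zero_or_pos n with hn | hn
  · subst hn; simp
  have hm0 : (0:ℝ) < m := by exact_mod_cast hm
  set v : Fin n → Fin m → EuclideanSpace ℝ (Fin d) := fun τ i => A τ i (h τ i) with hv
  set Hs := ∑ τ, ∑ i, ‖h τ i‖^2 with hHs
  have hHs0 : 0 ≤ Hs := Finset.sum_nonneg fun _ _ => Finset.sum_nonneg fun _ _ => sq_nonneg _
  have hRm0 : 0 ≤ Rm := le_trans (norm_nonneg _) (hRm ⟨0, hn⟩ ⟨0, hm⟩)
  set D := ∑ τ, ∑ i, ‖v τ i‖^2 with hD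
  set Q := ‖∑ τ, ∑ i, v τ i‖^2 with hQ
  set P := ∑ τ, ‖∑ i, v τ i‖^2 with hP
  have key : ∑ σ : Fin n → Fin m, ‖∑ τ, A τ (σ τ) (h τ (σ τ))‖ ^ 2
      = (m:ℝ)^(n-1) * D + (m:ℝ)^(n-2) * (Q - P) := by
    calc ∑ σ : Fin n → Fin m, ‖∑ τ, A τ (σ τ) (h τ (σ τ))‖ ^ 2
        = ∑ σ : Fin n → Fin m, ∑ τ, ∑ τ', ⟪v τ (σ τ), v τ' (σ τ')⟫ :=
          Finset.sum_congr rfl fun σ _ => eso_expand_sq _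
      _ = ∑ τ, ∑ τ', ∑ σ : Fin n → Fin m, ⟪v τ (σ τ), v τ' (σ τ')⟫ := by
          rw [Finset.sum_comm]
          exact Finset.sum_congr rfl fun τ _ => Finset.sum_comm
      _ = ∑ τ, ((m:ℝ)^(n-1) * ∑ i, ‖v τ i‖^2
            + (m:ℝ)^(n-2) * ∑ τ' ∈ Finset.univ.erase τ, ⟪∑ i, v τ i, ∑ j, v τ' j⟫) := by
          refine Finset.sum_congr rfl fun τ _ => ?_
          rw [← Finset.sum_erase_add _ _ (Finset.mem_univ τ)]
          have hdiag : ∑ σ : Fin n → Fin m, ⟪v τ (σ τ), v τ (σ τ)⟫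
              = (m:ℝ)^(n-1) * ∑ i, ‖v τ i‖^2 := by
            simp only [real_inner_self_eq_norm_sq]
            simpa using sum_pi_eval' m τ (fun i => ‖v τ i‖^2)
          have hoff : ∀ τ' ∈ Finset.univ.erase τ,
              ∑ σ : Fin n → Fin m, ⟪v τ (σ τ), v τ' (σ τ')⟫
              = (m:ℝ)^(n-2) * ⟪∑ i, v τ i, ∑ j, v τ' j⟫ := by
            intro τ' hτ'
            have hne : τ' ≠ τ := Finset.ne_of_mem_erase hτ'
            have := sum_pi_eval2 m hne (fun i j => ⟪v τ i, v τ' j⟫)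
            simp only [Fintype.card_fin] at this
            rw [this, sum_inner]
            congr 1
            exact Finset.sum_congr rfl fun i _ => (inner_sum _ _ _).symm
          rw [hdiag, Finset.sum_congr rfl hoff, ← Finset.mul_sum, add_comm]
      _ = (m:ℝ)^(n-1) * D + (m:ℝ)^(n-2) * (Q - P) := by
          rw [Finset.sum_add_distrib, ← Finset.mul_sum, ← Finset.mul_sum, ← hD]
          congr 2
          have : ∀ τ : Fin n, ∑ τ' ∈ Finset.univ.erase τ, ⟪∑ i, v τ i, ∑ j, v τ' j⟫
              = (∑ τ', ⟪∑ i, v τ i, ∑ j, v τ' j⟫) - ‖∑ i, v τ i‖^2 := by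
            intro τ
            rw [← Finset.sum_erase_add _ _ (Finset.mem_univ τ), real_inner_self_eq_norm_sq]
            ring
          rw [Finset.sum_congr rfl fun τ _ => this τ, Finset.sum_sub_distrib, ← hP]
          congr 1
          rw [hQ, eso_expand_sq]
  rw [key, mul_add]
  have e1 : (m:ℝ)^n = (m:ℝ)^(n-1) * m := by
    rw [← pow_succ]; congr 1; omega
  have hDb : D ≤ Rm^2 * Hs := by
    rw [hD, hHs, Finset.mul_sum]
    refine Finset.sum_le_sum fun τ _ => ?_
    rw [Finset.mul_sum]
    refine Finset.sum_le_sum fun i _ => ?_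
    have h1 : ‖v τ i‖ ≤ Rm * ‖h τ i‖ :=
      le_trans ((A τ i).le_opNorm _) (mul_le_mul_of_nonneg_right (hRm τ i) (norm_nonneg _))
    calc ‖v τ i‖^2 ≤ (Rm * ‖h τ i‖)^2 := pow_le_pow_left₀ (norm_nonneg _) h1 2
      _ = Rm^2 * ‖h τ i‖^2 := by ring
  have hQb : Q ≤ ((m:ℝ) * n) * R^2 * Hs := hR h
  have hP0 : 0 ≤ P := Finset.sum_nonneg fun _ _ => sq_nonneg _
  have hQ0 : 0 ≤ Q := sq_nonneg _
  have t1 : (1 / (m:ℝ)^n) * ((m:ℝ)^(n-1) * D) ≤ (1/m) * (Rm^2 * Hs) := by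
    rw [e1]
    have hpow : (0:ℝ) < (m:ℝ)^(n-1) := pow_pos hm0 _
    rw [show (1 / ((m:ℝ)^(n-1) * m)) * ((m:ℝ)^(n-1) * D) = (1/m) * D by
      field_simp]
    exact mul_le_mul_of_nonneg_left hDb (by positivity)
  have t2 : (1 / (m:ℝ)^n) * ((m:ℝ)^(n-2) * (Q - P)) ≤ (1/m) * ((n:ℝ) * R^2 * Hs) := by
    have hQb' : (1/(m:ℝ)^2) * Q ≤ (1/m) * ((n:ℝ) * R^2 * Hs) := by
      rw [show (1/(m:ℝ)) * ((n:ℝ) * R^2 * Hs) = (1/(m:ℝ)^2) * (((m:ℝ) * n) * R^2 * Hs) by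
        field_simp]
      exact mul_le_mul_of_nonneg_left hQb (by positivity)
    refine le_trans ?_ hQb'
    rcases eq_or_lt_of_le (show 1 ≤ n from hn) with hn1 | hn2
    · -- n = 1
      have hcard1 : Fintype.card (Fin n) = 1 := by simp [← hn1]
      obtain ⟨τ0, hτ0⟩ := Fintype.card_eq_one_iff.mp hcard1
      have huniv : (Finset.univ : Finset (Fin n)) = {τ0} := by
        ext b; simp [hτ0 b]
      have hQP : Q = P := by
        rw [hQ, hP, huniv, Finset.sum_singleton, Finset.sum_singleton]
      rw [hQP, sub_self, mul_zero, mul_zero]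
      exact mul_nonneg (by positivity) hP0
    · -- n ≥ 2
      have hn2' : 2 ≤ n := hn2
      have e2 : (m:ℝ)^n = (m:ℝ)^(n-2) * m^2 := by
        rw [← pow_add]; congr 1; omega
      rw [e2, show (1 / ((m:ℝ)^(n-2) * m^2)) * ((m:ℝ)^(n-2) * (Q - P))
          = (1/(m:ℝ)^2) * (Q - P) by
        have hpow : (0:ℝ) < (m:ℝ)^(n-2) := pow_pos hm0 _
        field_simp]
      exact mul_le_mul_of_nonneg_left (by linarith) (by positivity)
  calc (1 / (m:ℝ)^n) * ((m:ℝ)^(n-1) * D) + (1 / (m:ℝ)^n) * ((m:ℝ)^(n-2) * (Q - P))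
      ≤ (1/m) * (Rm^2 * Hs) + (1/m) * ((n:ℝ) * R^2 * Hs) := add_le_add t1 t2
    _ = (1 / (m:ℝ)) * (Rm ^ 2 + n * R ^ 2) * Hs := by ring
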